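/- Suppose the data points x₁,…,xₙ are affinely independent, (w, b) is a hard margin solution, and w gives complete data piling. Then for every vector v lying in the vectorSpan of the data that gives complete data piling (the maximal data piling direction), there exists a real t ≠ 0 with w = t • v. -/

import Mathlib

open scoped RealInnerProductSpace BigOperators

variable {E : Type*} [NormedAddCommGroup E] [InnerProductSpace ℝ E]

/-- A vector `v` gives complete data piling for the labeled data `(x, y)`. -/
def Piling {n : ℕ} (x : Fin n → E) (y : Fin n → ℝ) (v : E) : Prop :=
  ∃ a b : ℝ, a ≠ 0 ∧ ∀ i, ⟪v, x i⟫ = a * y i + b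

/-- `(w, b)` is feasible for the hard margin SVM problem. -/
def HardFeasible {n : ℕ} (x : Fin n → E) (y : Fin n → ℝ) (w : E) (b : ℝ) : Prop :=
  ∀ i, 1 ≤ y i * (⟪w, x i⟫ + b)

/-- `(w, b)` is a hard margin SVM solution. -/
def HardSolution {n : ℕ} (x : Fin n → E) (y : Fin n → ℝ) (w : E) (b : ℝ) : Prop :=
  HardFeasible x y w b ∧
    ∀ w' : E, ∀ b' : ℝ, HardFeasible x y w' b' → (1 / 2) * ‖w‖ ^ 2 ≤ (1 / 2) * ‖w'‖ ^ 2

theorem hard_margin_piling_is_mdp {n : ℕ} (x : Fin n → E) (y : Fin n → ℝ)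
    (hy : ∀ i, y i = 1 ∨ y i = -1)
    (hpos : ∃ i, y i = 1) (hneg : ∃ i, y i = -1)
    (hind : AffineIndependent ℝ x)
    (w : E) (b : ℝ) (hsol : HardSolution x y w b) (hpile : Piling x y w) :
    ∀ v ∈ vectorSpan ℝ (Set.range x), Piling x y v → ∃ t : ℝ, t ≠ 0 ∧ w = t • v := by
  intro v hv hvp
  obtain ⟨a, c, ha, hwi⟩ := hpile
  obtain ⟨a', c', ha', hvi⟩ := hvp
  set K := vectorSpan ℝ (Set.range x) with hK
  haveI : FiniteDimensional ℝ K := by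
    rw [hK, vectorSpan_def]
    exact FiniteDimensional.span_of_finite ℝ ((Set.finite_range x).vsub (Set.finite_range x))
  obtain ⟨i₀, hi₀⟩ := hpos
  set w' : E := (K.orthogonalProjectionOnto w : E) with hw'
  have hw'K : w' ∈ K := (K.orthogonalProjectionOnto w).2
  have huO : w - w' ∈ Kᗮ := by
    have := K.sub_starProjection_mem_orthogonal w; rwa [K.starProjection_apply] at this
  set c0 : ℝ := ⟪w - w', x i₀⟫ with hc0
  have hconst : ∀ i, ⟪w - w', x i⟫ = c0 := by
    intro i
    have hmem : x i - x i₀ ∈ K := by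
      have := vsub_mem_vectorSpan ℝ (Set.mem_range_self (f := x) i)
        (Set.mem_range_self (f := x) i₀)
      simpa [hK] using this
    have h0 : ⟪x i - x i₀, w - w'⟫ = 0 := (Submodule.mem_orthogonal K (w - w')).1 huO _ hmem
    have h0' : ⟪w - w', x i - x i₀⟫ = 0 := by rw [real_inner_comm]; exact h0
    rw [inner_sub_right] at h0'
    linarith
  have hfeas' : HardFeasible x y w' (b + c0) := by
    intro i
    have h1 := hsol.1 i
    have h2 : ⟪w', x i⟫ = ⟪w, x i⟫ - c0 := by
      have := hconst i
      rw [inner_sub_left] at this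
      linarith
    have h3 : ⟪w', x i⟫ + (b + c0) = ⟪w, x i⟫ + b := by rw [h2]; ring
    rw [h3]; exact h1
  have hle := hsol.2 w' (b + c0) hfeas'
  have hpyth : ‖w‖ ^ 2 = ‖w'‖ ^ 2 + ‖w - w'‖ ^ 2 := by
    have hz : ⟪w', w - w'⟫ = 0 := by
      have := (Submodule.mem_orthogonal K (w - w')).1 huO _ hw'K
      exact this
    have : w = w' + (w - w') := by abel
    calc ‖w‖ ^ 2 = ‖w' + (w - w')‖ ^ 2 := by rw [← this]
      _ = ‖w'‖ ^ 2 + 2 * ⟪w', w - w'⟫ + ‖w - w'‖ ^ 2 := norm_add_sq_real _ _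
      _ = ‖w'‖ ^ 2 + ‖w - w'‖ ^ 2 := by rw [hz]; ring
  have hwK : w ∈ K := by
    have h4 : ‖w - w'‖ ^ 2 ≤ 0 := by nlinarith [hle, hpyth]
    have h5 : ‖w - w'‖ = 0 := by nlinarith [norm_nonneg (w - w'), sq_nonneg (‖w - w'‖)]
    have : w = w' := by
      have := norm_eq_zero.mp h5
      have := sub_eq_zero.mp this
      exact this
    rw [this]; exact hw'K
  -- step 2
  refine ⟨a / a', div_ne_zero ha ha', ?_⟩
  set t : ℝ := a / a' with ht
  have hta : t * a' = a := div_mul_cancel₀ a ha'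
  set u : E := w - t • v with hu
  have huK : u ∈ K := K.sub_mem hwK (K.smul_mem t hv)
  have huconst : ∀ i, ⟪u, x i⟫ = c - t * c' := by
    intro i
    rw [hu, inner_sub_left, real_inner_smul_left, hwi, hvi]
    rw [ht]
    field_simp
    ring
  have horth : ∀ z ∈ K, ⟪u, z⟫ = 0 := by
    intro z hz
    rw [hK, vectorSpan_def] at hz
    induction hz using Submodule.span_induction with
    | mem p hp =>
      obtain ⟨p₁, hp₁, p₂, hp₂, rfl⟩ := Set.mem_vsub.mp hp
      obtain ⟨i, rfl⟩ := hp₁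
      obtain ⟨j, rfl⟩ := hp₂
      rw [vsub_eq_sub, inner_sub_right, huconst, huconst]
      ring
    | zero => exact inner_zero_right u
    | add p q _ _ hp hq => rw [inner_add_right, hp, hq]; ring
    | smul r p _ hp => rw [real_inner_smul_right, hp]; ring
  have : ⟪u, u⟫ = 0 := horth u huK
  have hu0 : u = 0 := inner_self_eq_zero.mp (by exact_mod_cast this)
  have := sub_eq_zero.mp hu0
  exact this
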